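/- The entropy h_Γ := P_Γ(0) satisfies h_Γ = max_{p ∈ Π_Γ} h_Γ(p), the maximum of the density entropy over all density points. -/

import Mathlib

open Filter Topology Matrix
open scoped Classical

namespace Soft

/-! Basic notions for nearest-neighbour subshifts of finite type (NNSOFT) on `ℤ^d`:
boxes, allowed colorings, color counts, the grand partition function `Z_Γ(m,u)`. -/

/-- The set of sites of the box `⟨m⟩ = [m₁] × ⋯ × [m_d]` (zero-indexed). -/
def box {d : ℕ} (m : Fin d → ℕ) : Set (Fin d → ℕ) := {x | ∀ i, x i < m i}

/-- The site `x + e_k`. -/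
def step {d : ℕ} (x : Fin d → ℕ) (k : Fin d) : Fin d → ℕ :=
  Function.update x k (x k + 1)

/-- `vol(m) = m₁ ⋯ m_d`. -/
def vol {d : ℕ} (m : Fin d → ℕ) : ℕ := ∏ i, m i

/-- `φ` satisfies all nearest-neighbour constraints imposed by `Γ` inside the box `⟨m⟩`:
whenever `x` and `x + e_k` both lie in the box, `(φ x, φ (x + e_k)) ∈ Γ k`. -/
def Allowed {d n : ℕ} (Γ : Fin d → Set (Fin n × Fin n)) (m : Fin d → ℕ)
    (φ : (Fin d → ℕ) → Fin n) : Prop :=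
  ∀ x ∈ box m, ∀ k : Fin d, step x k ∈ box m → (φ x, φ (step x k)) ∈ Γ k

/-- `φ` takes the default color `0` outside the box `⟨m⟩`; colorings of `⟨m⟩` are represented
by functions on all of `ℕ^d` normalized in this way (so that there are finitely many). -/
def Normalized {d n : ℕ} [NeZero n] (m : Fin d → ℕ) (φ : (Fin d → ℕ) → Fin n) : Prop :=
  ∀ x, x ∉ box m → φ x = 0

/-- `C_Γ(⟨m⟩)`: the set of `Γ`-allowed colorings of the box `⟨m⟩`. -/
def Col {d n : ℕ} [NeZero n] (Γ : Fin d → Set (Fin n × Fin n)) (m : Fin d → ℕ) :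
    Set ((Fin d → ℕ) → Fin n) :=
  {φ | Allowed Γ m φ ∧ Normalized m φ}

/-- `Γ`-allowed colorings of the whole lattice `ℤ^d`. -/
def AllowedZ {d n : ℕ} (Γ : Fin d → Set (Fin n × Fin n)) (φ : (Fin d → ℤ) → Fin n) : Prop :=
  ∀ (x : Fin d → ℤ) (k : Fin d), (φ x, φ (Function.update x k (x k + 1))) ∈ Γ k

/-- `c(φ)_j`: the number of sites of `⟨m⟩` colored `j` by `φ`. -/
noncomputable def cnt {d n : ℕ} (m : Fin d → ℕ) (φ : (Fin d → ℕ) → Fin n) (j : Fin n) : ℕ :=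
  Nat.card {x : Fin d → ℕ // x ∈ box m ∧ φ x = j}

/-- The weight `exp (c(φ)ᵀ u)` of a coloring `φ` of `⟨m⟩`. -/
noncomputable def weight {d n : ℕ} (m : Fin d → ℕ) (φ : (Fin d → ℕ) → Fin n)
    (u : Fin n → ℝ) : ℝ :=
  Real.exp (∑ j, (cnt m φ j : ℝ) * u j)

/-- The grand partition function `Z_Γ(m,u) = Σ_{φ ∈ C_Γ(⟨m⟩)} exp (c(φ)ᵀ u)`. -/
noncomputable def Z {d n : ℕ} [NeZero n] (Γ : Fin d → Set (Fin n × Fin n)) (m : Fin d → ℕ)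
    (u : Fin n → ℝ) : ℝ :=
  ∑' φ : Col Γ m, weight m φ.1 u

/-! Density points and the density entropy. -/

/-- `p ∈ Π_Γ`: `p` is a probability vector arising as a limiting color-frequency vector of
allowed colorings of a sequence of boxes all whose sides tend to infinity. -/
def IsDensityPoint {d n : ℕ} [NeZero n] (Γ : Fin d → Set (Fin n × Fin n))
    (p : Fin n → ℝ) : Prop :=
  (∀ i, 0 ≤ p i) ∧ (∑ i, p i) = 1 ∧
  ∃ (mq : ℕ → Fin d → ℕ) (cq : ℕ → Fin n → ℕ),
    Tendsto mq atTop atTop ∧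
    (∀ q, (∑ i, cq q i) = vol (mq q)) ∧
    (∀ q, ∃ φ ∈ Col Γ (mq q), ∀ j, cnt (mq q) φ j = cq q j) ∧
    Tendsto (fun q => fun i => (cq q i : ℝ) / (vol (mq q) : ℝ)) atTop (𝓝 p)

/-- `#C_Γ(⟨m⟩, c)`: the number of `Γ`-allowed colorings of `⟨m⟩` with color-frequency
vector `c`. -/
noncomputable def NCol {d n : ℕ} [NeZero n] (Γ : Fin d → Set (Fin n × Fin n))
    (m : Fin d → ℕ) (c : Fin n → ℕ) : ℕ :=
  Nat.card {φ : (Fin d → ℕ) → Fin n // φ ∈ Col Γ m ∧ ∀ j, cnt m φ j = c j}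

/-- The density entropy `h_Γ(p)`: the supremum, over all sequences of boxes and
color-frequency vectors converging in frequency to `p`, of the exponential growth rate
`limsup_q log #C_Γ(⟨m_q⟩,c_q) / vol(m_q)`. -/
noncomputable def densityEntropy {d n : ℕ} [NeZero n] (Γ : Fin d → Set (Fin n × Fin n))
    (p : Fin n → ℝ) : ℝ :=
  sSup {h | ∃ (mq : ℕ → Fin d → ℕ) (cq : ℕ → Fin n → ℕ),
    Tendsto mq atTop atTop ∧
    (∀ q, (∑ i, cq q i) = vol (mq q)) ∧
    (∀ q, ∃ φ ∈ Col Γ (mq q), ∀ j, cnt (mq q) φ j = cq q j) ∧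
    Tendsto (fun q => fun i => (cq q i : ℝ) / (vol (mq q) : ℝ)) atTop (𝓝 p) ∧
    h = Filter.limsup
      (fun q => Real.log (NCol Γ (mq q) (cq q)) / (vol (mq q) : ℝ)) atTop}


-- ### auxiliary lemmas

variable {d n : ℕ}

noncomputable def boxFS (m : Fin d → ℕ) : Finset (Fin d → ℕ) :=
  Fintype.piFinset fun i => Finset.range (m i)

lemma mem_boxFS {m : Fin d → ℕ} {x : Fin d → ℕ} : x ∈ boxFS m ↔ x ∈ box m := by
  simp [boxFS, box, Fintype.mem_piFinset, Finset.mem_range]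

lemma card_boxFS (m : Fin d → ℕ) : (boxFS m).card = vol m := by
  simp [boxFS, vol, Fintype.card_piFinset]

lemma cnt_eq {n : ℕ} (m : Fin d → ℕ) (φ : (Fin d → ℕ) → Fin n) (j : Fin n) :
    cnt m φ j = ((boxFS m).filter fun x => φ x = j).card := by
  have h : {x : Fin d → ℕ | x ∈ box m ∧ φ x = j}
      = ↑((boxFS m).filter fun x => φ x = j) := by
    ext x; simp [mem_boxFS]
  rw [cnt, show {x : Fin d → ℕ // x ∈ box m ∧ φ x = j}
      = ↥{x : Fin d → ℕ | x ∈ box m ∧ φ x = j} from rfl, h,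
    Nat.card_coe_set_eq, Set.ncard_coe_finset]

lemma sum_cnt {n : ℕ} (m : Fin d → ℕ) (φ : (Fin d → ℕ) → Fin n) [NeZero n] :
    ∑ j, cnt m φ j = vol m := by
  simp_rw [cnt_eq]
  rw [← card_boxFS m]
  exact (Finset.card_eq_sum_card_fiberwise (fun x _ => Finset.mem_univ (φ x))).symm

lemma cnt_le {n : ℕ} (m : Fin d → ℕ) (φ : (Fin d → ℕ) → Fin n) (j : Fin n) :
    cnt m φ j ≤ vol m := by
  rw [cnt_eq, ← card_boxFS m]; exact Finset.card_filter_le _ _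

lemma col_finite [NeZero n] (Γ : Fin d → Set (Fin n × Fin n)) (m : Fin d → ℕ) :
    (Col Γ m).Finite := by
  have hsub : Col Γ m ⊆ {φ | Normalized m φ} := fun φ h => h.2
  refine Set.Finite.subset ?_ hsub
  rw [← Set.finite_coe_iff]
  apply Finite.of_injective (fun φ : {φ : (Fin d → ℕ) → Fin n // Normalized m φ} =>
    (fun x : boxFS m => φ.1 x.1))
  intro φ ψ h
  apply Subtype.ext; funext x
  by_cases hx : x ∈ box m
  · exact congrFun h ⟨x, mem_boxFS.2 hx⟩
  · rw [φ.2 x hx, ψ.2 x hx]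

lemma col_nonempty [NeZero n] {Γ : Fin d → Set (Fin n × Fin n)}
    (hne : ∃ φ : (Fin d → ℤ) → Fin n, AllowedZ Γ φ) (m : Fin d → ℕ) :
    (Col Γ m).Nonempty := by
  obtain ⟨φZ, hφZ⟩ := hne
  refine ⟨fun x => if x ∈ box m then φZ (fun i => (x i : ℤ)) else 0, ?_, ?_⟩
  · intro x hx k hk
    simp only [if_pos hx, if_pos hk]
    have hup : (fun i => ((step x k i : ℕ) : ℤ))
        = Function.update (fun i => ((x i : ℕ) : ℤ)) k (((x k : ℕ) : ℤ) + 1) := by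
      funext i
      by_cases h : i = k
      · subst h; simp [step]
      · simp [step, Function.update_of_ne h]
    rw [hup]
    exact hφZ _ k
  · intro x hx; simp only [if_neg hx]

lemma Z_zero [NeZero n] (Γ : Fin d → Set (Fin n × Fin n)) (m : Fin d → ℕ) :
    Z Γ m 0 = (Nat.card (Col Γ m) : ℝ) := by
  unfold Z weight
  simp only [Pi.zero_apply, mul_zero, Finset.sum_const_zero, Real.exp_zero]
  rw [tsum_const]
  simp

noncomputable def ColFS [NeZero n] (Γ : Fin d → Set (Fin n × Fin n)) (m : Fin d → ℕ) :
    Finset ((Fin d → ℕ) → Fin n) := (col_finite Γ m).toFinset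

lemma card_col [NeZero n] (Γ : Fin d → Set (Fin n × Fin n)) (m : Fin d → ℕ) :
    Nat.card (Col Γ m) = (ColFS Γ m).card := by
  rw [Nat.card_coe_set_eq, Set.ncard_eq_toFinset_card _ (col_finite Γ m), ColFS]

lemma NCol_eq [NeZero n] (Γ : Fin d → Set (Fin n × Fin n)) (m : Fin d → ℕ) (c : Fin n → ℕ) :
    NCol Γ m c = ((ColFS Γ m).filter fun φ => (fun j => cnt m φ j) = c).card := by
  have h : {φ : (Fin d → ℕ) → Fin n | φ ∈ Col Γ m ∧ ∀ j, cnt m φ j = c j}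
      = ↑((ColFS Γ m).filter fun φ => (fun j => cnt m φ j) = c) := by
    ext φ
    simp [ColFS, funext_iff]
  rw [NCol, show {φ : (Fin d → ℕ) → Fin n // φ ∈ Col Γ m ∧ ∀ j, cnt m φ j = c j}
      = ↥{φ : (Fin d → ℕ) → Fin n | φ ∈ Col Γ m ∧ ∀ j, cnt m φ j = c j} from rfl, h,
    Nat.card_coe_set_eq, Set.ncard_coe_finset]

lemma NCol_le_card [NeZero n] (Γ : Fin d → Set (Fin n × Fin n)) (m : Fin d → ℕ)
    (c : Fin n → ℕ) : NCol Γ m c ≤ Nat.card (Col Γ m) := by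
  rw [NCol_eq, card_col]; exact Finset.card_filter_le _ _

lemma key [NeZero n] {Γ : Fin d → Set (Fin n × Fin n)}
    (hne : ∃ φ : (Fin d → ℤ) → Fin n, AllowedZ Γ φ) (m : Fin d → ℕ) :
    ∃ c : Fin n → ℕ, (∑ i, c i) = vol m ∧ (∃ φ ∈ Col Γ m, ∀ j, cnt m φ j = c j) ∧
      Nat.card (Col Γ m) ≤ (vol m + 1) ^ n * NCol Γ m c := by
  classical
  set s := ColFS Γ m with hs
  have hsne : s.Nonempty := (Set.Finite.toFinset_nonempty _).2 (col_nonempty hne m)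
  set f : ((Fin d → ℕ) → Fin n) → (Fin n → ℕ) := fun φ => fun j => cnt m φ j with hf
  obtain ⟨c, hcmem, hmax⟩ :=
    Finset.exists_max_image (s.image f) (fun c => (s.filter fun φ => f φ = c).card)
      (hsne.image f)
  obtain ⟨φ0, hφ0s, hfφ0⟩ := Finset.mem_image.1 hcmem
  have hφ0 : φ0 ∈ Col Γ m := (Set.Finite.mem_toFinset _).1 hφ0s
  refine ⟨c, ?_, ⟨φ0, hφ0, fun j => by rw [← hfφ0]⟩, ?_⟩
  · rw [← hfφ0]; exact sum_cnt m φ0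
  · have h1 : s.card = ∑ c' ∈ s.image f, (s.filter fun φ => f φ = c').card :=
      Finset.card_eq_sum_card_fiberwise fun x hx => Finset.mem_image_of_mem f hx
    have h2 : ∑ c' ∈ s.image f, (s.filter fun φ => f φ = c').card
        ≤ (s.image f).card • (s.filter fun φ => f φ = c).card :=
      Finset.sum_le_card_nsmul _ _ _ hmax
    have h3 : (s.image f).card ≤ (vol m + 1) ^ n := by
      have hsub : s.image f ⊆ Fintype.piFinset fun _ : Fin n => Finset.range (vol m + 1) := by
        intro c' hc'
        obtain ⟨φ, hφ, rfl⟩ := Finset.mem_image.1 hc'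
        simp only [Fintype.mem_piFinset, Finset.mem_range, Nat.lt_succ_iff]
        exact fun j => cnt_le m φ j
      calc (s.image f).card ≤ _ := Finset.card_le_card hsub
        _ = (vol m + 1) ^ n := by simp [Fintype.card_piFinset]
    rw [card_col, NCol_eq]
    calc (ColFS Γ m).card = _ := h1
      _ ≤ (s.image f).card * (s.filter fun φ => f φ = c).card := by
          simpa [smul_eq_mul] using h2
      _ ≤ (vol m + 1) ^ n * (s.filter fun φ => f φ = c).card :=
          Nat.mul_le_mul_right _ h3

lemma log_div_tendsto : Tendsto (fun x : ℝ => Real.log (x + 1) / x) atTop (𝓝 0) := by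
  have h1 : (fun x : ℝ => Real.log (x + 1)) =o[atTop] (fun x : ℝ => x + 1) := by
    simpa [Function.comp_def] using
      Real.isLittleO_log_id_atTop.comp_tendsto (tendsto_atTop_add_const_right atTop 1 tendsto_id)
  have h2 : (fun x : ℝ => x + 1) =O[atTop] (fun x : ℝ => x) := by
    apply Asymptotics.IsBigO.of_bound 2
    filter_upwards [eventually_ge_atTop (1 : ℝ)] with x hx
    rw [Real.norm_eq_abs, Real.norm_eq_abs, abs_of_pos (by linarith), abs_of_pos (by linarith)]
    linarith
  exact (h1.trans_isBigO h2).tendsto_div_nhds_zero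

lemma eps_tendsto (vq : ℕ → ℕ) (hv : Tendsto vq atTop atTop) :
    Tendsto (fun q => (n : ℝ) * Real.log ((vq q : ℝ) + 1) / (vq q : ℝ)) atTop (𝓝 0) := by
  have h := log_div_tendsto.comp (tendsto_natCast_atTop_atTop.comp hv)
  have h2 := h.const_mul (n : ℝ)
  simpa [Function.comp, mul_div_assoc] using h2

lemma ncol_pos [NeZero n] (Γ : Fin d → Set (Fin n × Fin n)) (m : Fin d → ℕ)
    (c : Fin n → ℕ) (hw : ∃ φ ∈ Col Γ m, ∀ j, cnt m φ j = c j) :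
    0 < NCol Γ m c := by
  obtain ⟨φ, hφ, hc⟩ := hw
  have hfin : ({φ : (Fin d → ℕ) → Fin n | φ ∈ Col Γ m ∧ ∀ j, cnt m φ j = c j}).Finite :=
    (col_finite Γ m).subset fun φ h => h.1
  have : Finite {φ : (Fin d → ℕ) → Fin n // φ ∈ Col Γ m ∧ ∀ j, cnt m φ j = c j} :=
    hfin.to_subtype
  have : Nonempty {φ : (Fin d → ℕ) → Fin n // φ ∈ Col Γ m ∧ ∀ j, cnt m φ j = c j} :=
    ⟨⟨φ, hφ, hc⟩⟩
  exact Nat.card_pos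

lemma card_col_pos [NeZero n] {Γ : Fin d → Set (Fin n × Fin n)}
    (hne : ∃ φ : (Fin d → ℤ) → Fin n, AllowedZ Γ φ) (m : Fin d → ℕ) :
    0 < Nat.card (Col Γ m) := by
  have : Finite (Col Γ m) := (col_finite Γ m).to_subtype
  have : Nonempty (Col Γ m) := (col_nonempty hne m).to_subtype
  exact Nat.card_pos

/-- The general upper bound: any admissible limsup is at most `P 0`. -/
lemma upper [NeZero n] {Γ : Fin d → Set (Fin n × Fin n)}
    (hne : ∃ φ : (Fin d → ℤ) → Fin n, AllowedZ Γ φ)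
    {P : (Fin n → ℝ) → ℝ}
    (hP : ∀ u, Tendsto (fun m : Fin d → ℕ =>
        Real.log (Z Γ m u) / (vol m : ℝ)) atTop (𝓝 (P u)))
    (mq : ℕ → Fin d → ℕ) (cq : ℕ → Fin n → ℕ)
    (hmq : Tendsto mq atTop atTop)
    (hwit : ∀ q, ∃ φ ∈ Col Γ (mq q), ∀ j, cnt (mq q) φ j = cq q j) :
    Filter.limsup
      (fun q => Real.log (NCol Γ (mq q) (cq q)) / (vol (mq q) : ℝ)) atTop ≤ P 0 := by
  set f : ℕ → ℝ := fun q => Real.log (NCol Γ (mq q) (cq q)) / (vol (mq q) : ℝ) with hfdef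
  set g : ℕ → ℝ := fun q => Real.log (Z Γ (mq q) 0) / (vol (mq q) : ℝ) with hgdef
  have hg : Tendsto g atTop (𝓝 (P 0)) := (hP 0).comp hmq
  have hfpos : ∀ q, 0 ≤ f q := fun q =>
    div_nonneg (Real.log_nonneg (by exact_mod_cast ncol_pos Γ (mq q) (cq q) (hwit q)))
      (Nat.cast_nonneg _)
  have hle : ∀ q, f q ≤ g q := by
    intro q
    have h1 : Real.log (NCol Γ (mq q) (cq q)) ≤ Real.log (Z Γ (mq q) 0) := by
      rw [Z_zero]
      exact Real.log_le_log (by exact_mod_cast ncol_pos Γ (mq q) (cq q) (hwit q))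
        (by exact_mod_cast NCol_le_card Γ (mq q) (cq q))
    rcases eq_or_lt_of_le (Nat.cast_nonneg (vol (mq q)) : (0:ℝ) ≤ _) with h | h
    · simp [hfdef, hgdef, ← h]
    · exact (div_le_div_iff_of_pos_right h).2 h1
  have hcob : Filter.IsCoboundedUnder (· ≤ ·) atTop f :=
    (Filter.isBoundedUnder_of ⟨0, hfpos⟩).isCoboundedUnder_le
  calc limsup f atTop ≤ limsup g atTop :=
        limsup_le_limsup (Eventually.of_forall hle) hcob hg.isBoundedUnder_le
    _ = P 0 := hg.limsup_eq

lemma tendsto_cube (hd : 0 < d) :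
    Tendsto (fun q : ℕ => (fun _ : Fin d => q + 1)) atTop atTop := by
  rw [tendsto_atTop]
  intro b
  filter_upwards [eventually_ge_atTop (Finset.univ.sup b)] with q hq
  intro i
  exact le_trans (Finset.le_sup (Finset.mem_univ i)) (le_trans hq (Nat.le_succ q))


/-- The entropy `h_Γ = P_Γ(0)` satisfies
`h_Γ = max_{p ∈ Π_Γ} h_Γ(p)`, the maximum of the density entropy over all density
points (attained). -/
theorem entropy_eq_max_densityEntropy
    (d n : ℕ) (hd : 0 < d) [NeZero n]
    (Γ : Fin d → Set (Fin n × Fin n))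
    (hne : ∃ φ : (Fin d → ℤ) → Fin n, AllowedZ Γ φ)
    (P : (Fin n → ℝ) → ℝ)
    (hP : ∀ u, Tendsto (fun m : Fin d → ℕ =>
        Real.log (Z Γ m u) / (vol m : ℝ)) atTop (𝓝 (P u))) :
    IsGreatest {r : ℝ | ∃ p : Fin n → ℝ, IsDensityPoint Γ p ∧
      r = densityEntropy Γ p} (P 0) := by
  classical
  set mq : ℕ → Fin d → ℕ := fun q _ => q + 1 with hmqdef
  have hmq : Tendsto mq atTop atTop := tendsto_cube hd
  have hvolmq : ∀ q, vol (mq q) = (q + 1) ^ d := fun q => by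
    simp [hmqdef, vol, Finset.prod_const]
  have hvolpos : ∀ q, 0 < vol (mq q) := fun q => by rw [hvolmq]; positivity
  have hvoltend : Tendsto (fun q => vol (mq q)) atTop atTop := by
    apply tendsto_atTop_mono (fun q => ?_) (tendsto_add_atTop_nat 1)
    rw [hvolmq q]; exact Nat.le_self_pow hd.ne' _
  choose cq hsum hwit hbound using fun q => key hne (mq q)
  set a : ℕ → ℝ := fun q => Real.log (NCol Γ (mq q) (cq q)) / (vol (mq q) : ℝ) with hadef
  set b : ℕ → ℝ := fun q =>
    Real.log (Nat.card (Col Γ (mq q))) / (vol (mq q) : ℝ) with hbdef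
  have hb : Tendsto b atTop (𝓝 (P 0)) := by
    have h := (hP 0).comp hmq
    have hbe : b = (fun m : Fin d → ℕ => Real.log (Z Γ m 0) / (vol m : ℝ)) ∘ mq := by
      funext q; simp [hbdef, Function.comp, Z_zero]
    rw [hbe]; exact h
  have h0P : 0 ≤ P 0 :=
    ge_of_tendsto' hb fun q => div_nonneg
      (Real.log_nonneg (by exact_mod_cast card_col_pos hne (mq q))) (Nat.cast_nonneg _)
  have hNpos : ∀ q, 0 < NCol Γ (mq q) (cq q) := fun q => ncol_pos Γ (mq q) (cq q) (hwit q)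
  have hab1 : ∀ q, a q ≤ b q := by
    intro q
    apply (div_le_div_iff_of_pos_right (by exact_mod_cast hvolpos q)).2
    exact Real.log_le_log (by exact_mod_cast hNpos q)
      (by exact_mod_cast NCol_le_card Γ (mq q) (cq q))
  have hab2 : ∀ q,
      b q - (n : ℝ) * Real.log ((vol (mq q) : ℝ) + 1) / (vol (mq q) : ℝ) ≤ a q := by
    intro q
    rw [sub_le_iff_le_add]
    have hv : (0 : ℝ) < (vol (mq q) : ℝ) := by exact_mod_cast hvolpos q
    have h1 : Real.log (Nat.card (Col Γ (mq q)))
        ≤ (n : ℝ) * Real.log ((vol (mq q) : ℝ) + 1)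
          + Real.log (NCol Γ (mq q) (cq q)) := by
      have h2 : Real.log (Nat.card (Col Γ (mq q)))
          ≤ Real.log (((vol (mq q) + 1) ^ n * NCol Γ (mq q) (cq q) : ℕ) : ℝ) :=
        Real.log_le_log (by exact_mod_cast card_col_pos hne (mq q))
          (by exact_mod_cast hbound q)
      refine le_trans h2 (le_of_eq ?_)
      rw [Nat.cast_mul, Real.log_mul (by positivity)
        (by exact_mod_cast (hNpos q).ne'), Nat.cast_pow, Real.log_pow]
      push_cast
      ring
    calc b q ≤ ((n : ℝ) * Real.log ((vol (mq q) : ℝ) + 1)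
          + Real.log (NCol Γ (mq q) (cq q))) / (vol (mq q) : ℝ) :=
        (div_le_div_iff_of_pos_right hv).2 h1
      _ = a q + (n : ℝ) * Real.log ((vol (mq q) : ℝ) + 1) / (vol (mq q) : ℝ) := by
        rw [add_div]; ring
  have heps : Tendsto
      (fun q => (n : ℝ) * Real.log ((vol (mq q) : ℝ) + 1) / (vol (mq q) : ℝ))
      atTop (𝓝 0) := eps_tendsto _ hvoltend
  have hA : Tendsto a atTop (𝓝 (P 0)) := by
    have hlow := hb.sub heps
    rw [sub_zero] at hlow
    exact tendsto_of_tendsto_of_tendsto_of_le_of_le hlow hb hab2 hab1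
  set v : ℕ → Fin n → ℝ := fun q i => (cq q i : ℝ) / (vol (mq q) : ℝ) with hvdef
  have hvmem : ∀ q, v q ∈ Set.Icc (0 : Fin n → ℝ) 1 := by
    intro q
    constructor <;> intro i
    · positivity
    · show (cq q i : ℝ) / (vol (mq q) : ℝ) ≤ 1
      rw [div_le_one (by exact_mod_cast hvolpos q)]
      have : cq q i ≤ vol (mq q) := by
        rw [← hsum q]
        exact Finset.single_le_sum (fun i _ => Nat.zero_le _) (Finset.mem_univ i)
      exact_mod_cast this
  obtain ⟨p, hpK, ψ, hψ, hvp⟩ := (isCompact_Icc).tendsto_subseq hvmem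
  have hub : ∀ p' : Fin n → ℝ, densityEntropy Γ p' ≤ P 0 := by
    intro p'
    apply Real.sSup_le _ h0P
    rintro x ⟨mq', cq', hmq', hsum', hwit', -, rfl⟩
    exact upper hne hP mq' cq' hmq' hwit'
  have hdp : IsDensityPoint Γ p := by
    refine ⟨fun i => hpK.1 i, ?_, mq ∘ ψ, cq ∘ ψ, hmq.comp hψ.tendsto_atTop,
      fun q => hsum (ψ q), fun q => hwit (ψ q), by exact hvp⟩
    have hsum1 : (fun q => ∑ i, v (ψ q) i) = fun _ => (1 : ℝ) := by
      funext q
      rw [← Finset.sum_div, show ∑ i, ((cq (ψ q) i : ℝ)) = ((vol (mq (ψ q)) : ℝ)) from by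
        exact_mod_cast congrArg (Nat.cast : ℕ → ℝ) (hsum (ψ q))]
      exact div_self (by exact_mod_cast (hvolpos (ψ q)).ne')
    have hs2 : Tendsto (fun q => ∑ i, v (ψ q) i) atTop (𝓝 (∑ i, p i)) :=
      tendsto_finset_sum _ fun i _ => ((continuous_apply i).continuousAt.tendsto).comp hvp
    rw [hsum1] at hs2
    exact (tendsto_nhds_unique hs2 tendsto_const_nhds).symm ▸ rfl
  constructor
  · refine ⟨p, hdp, ?_⟩
    refine le_antisymm ?_ (hub p)
    apply le_csSup
    · refine ⟨P 0, ?_⟩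
      rintro x ⟨mq', cq', hmq', hsum', hwit', -, rfl⟩
      exact upper hne hP mq' cq' hmq' hwit'
    · refine ⟨mq ∘ ψ, cq ∘ ψ, hmq.comp hψ.tendsto_atTop,
        fun q => hsum (ψ q), fun q => hwit (ψ q), by exact hvp, ?_⟩
      exact ((hA.comp hψ.tendsto_atTop).limsup_eq).symm
  · rintro r ⟨p', hp', rfl⟩
    exact hub p'

end Soft
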